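/- Let E be an exact category with enough projectives, P a projective cover of E having weak simple products, and X an object of P. The following are equivalent: (1) for every object J of P and every subobject a of J × X, the subobject w_X(a) is a value of a right adjoint to (−) × X : Sub(J) → Sub(J × X), i.e. for all b ∈ Sub(J), b × X ≤ a iff b ≤ w_X(a); (2) the functor (−) × X : E → E preserves projective objects; (3) X is internally projective. -/

import Mathlib

open CategoryTheory Limits

namespace ExComp

universe v u

variable {E : Type u} [Category.{v} E]

/-- A regular epimorphism, as a property of a morphism. -/
def RegEpi {A B : E} (f : A ⟶ B) : Prop := Nonempty (RegularEpi f)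

/-- An object is (regular) projective if its covariant hom functor sends regular
epimorphisms to surjections. -/
def RegProjective (X : E) : Prop :=
  ∀ ⦃A B : E⦄ (e : A ⟶ B), RegEpi e → ∀ f : X ⟶ B, ∃ g : X ⟶ A, g ≫ e = f

/-- `E` has enough projectives: every object admits a regular epimorphism from a
projective object. -/
def EnoughRegProjectives (E : Type u) [Category.{v} E] : Prop :=
  ∀ A : E, ∃ (X : E) (p : X ⟶ A), RegProjective X ∧ RegEpi p

/-- An internal equivalence relation: a jointly monic, reflexive, symmetric and
transitive pair of parallel arrows. -/
structure IsEquivRelPair {R X : E} (r₁ r₂ : R ⟶ X) : Prop where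
  jointlyMono : ∀ ⦃T : E⦄ (h k : T ⟶ R), h ≫ r₁ = k ≫ r₁ → h ≫ r₂ = k ≫ r₂ → h = k
  refl : ∃ d : X ⟶ R, d ≫ r₁ = 𝟙 X ∧ d ≫ r₂ = 𝟙 X
  symm : ∃ s : R ⟶ R, s ≫ r₁ = r₂ ∧ s ≫ r₂ = r₁
  trans : ∀ ⦃T : E⦄ (p q : T ⟶ R), p ≫ r₂ = q ≫ r₁ →
    ∃ t : T ⟶ R, t ≫ r₁ = p ≫ r₁ ∧ t ≫ r₂ = q ≫ r₂

/-- An exact category: a finitely complete category where every morphism factors as a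
regular epi followed by a mono, regular epis are stable under pullback, and every
internal equivalence relation is effective (it is the kernel pair of the coequaliser
it admits). -/
structure IsExact (E : Type u) [Category.{v} E] [HasFiniteLimits E] : Prop where
  factor : ∀ ⦃A B : E⦄ (f : A ⟶ B), ∃ (I : E) (e : A ⟶ I) (m : I ⟶ B),
    RegEpi e ∧ Mono m ∧ e ≫ m = f
  stable : ∀ ⦃A B C : E⦄ (f : A ⟶ B) (g : C ⟶ B), RegEpi f → RegEpi (pullback.snd f g)
  effective : ∀ ⦃R X : E⦄ (r₁ r₂ : R ⟶ X), IsEquivRelPair r₁ r₂ →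
    ∃ (Q : E) (q : X ⟶ Q) (w : r₁ ≫ q = r₂ ≫ q),
      Nonempty (IsColimit (Cofork.ofπ q w)) ∧ IsPullback r₁ r₂ q q

/-- A projective cover of `E`: a (full sub)collection of objects, each projective,
such that every object of `E` admits a regular epimorphism from one of them. -/
def IsProjectiveCover (P : Set E) : Prop :=
  (∀ X ∈ P, RegProjective X) ∧ ∀ A : E, ∃ X ∈ P, ∃ p : X ⟶ A, RegEpi p

section FinLim
variable [HasFiniteLimits E]

/-- `X` is internally projective: every arrow `T ⨯ X ⟶ B` lifts along a regular epi
`A ↠ B` after passing to a regular epi `U ↠ T`. -/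
def InternallyProjective (X : E) : Prop :=
  ∀ ⦃T A B : E⦄ (e : A ⟶ B), RegEpi e → ∀ f : T ⨯ X ⟶ B,
    ∃ (U : E) (u : U ⟶ T) (g : U ⨯ X ⟶ A), RegEpi u ∧ g ≫ e = prod.map u (𝟙 X) ≫ f

/-- Cartesian closure, as a property: for every object `X` the functor `(−) ⨯ X` has a
right adjoint. -/
def CartesianClosedP (E : Type u) [Category.{v} E] [HasFiniteLimits E] : Prop :=
  ∀ X : E, (prod.functor.flip.obj X).IsLeftAdjoint

/-- Local cartesian closure, as a property: every slice is cartesian closed. -/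
def LocallyCartesianClosedP (E : Type u) [Category.{v} E] [HasFiniteLimits E] : Prop :=
  ∀ (I : E) (F : Over I), ((prod.functor (C := Over I)).flip.obj F).IsLeftAdjoint

end FinLim

/-! ## Weak products and weak simple products -/

/-- A weak product in `P` of `X` and `Y`: a span through which every span in `P`
factors (not necessarily uniquely). -/
structure IsWeakProduct (P : Set E) {X Y V : E} (p : V ⟶ X) (q : V ⟶ Y) : Prop where
  mem : V ∈ P
  lift : ∀ ⦃V' : E⦄, V' ∈ P → ∀ (p' : V' ⟶ X) (q' : V' ⟶ Y),
    ∃ h : V' ⟶ V, h ≫ p = p' ∧ h ≫ q = q'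

/-- An arrow out of a weak product is determined by projections if it coequalises
every pair of arrows (from an object of `P`) coequalised by both projections. -/
def DeterminedByProjections (P : Set E) {V X Y Z : E} (p : V ⟶ X) (q : V ⟶ Y)
    (f : V ⟶ Z) : Prop :=
  ∀ ⦃V' : E⦄, V' ∈ P → ∀ (h k : V' ⟶ V), h ≫ p = k ≫ p → h ≫ q = k ≫ q → h ≫ f = k ≫ f

/-- A candidate diagram for a weak simple product of a span `J ←f Y →g X`. -/
structure WSPCone (P : Set E) {J Y X : E} (f : Y ⟶ J) (g : Y ⟶ X)
    (W V : E) (w : W ⟶ J) (p : V ⟶ W) (q : V ⟶ X) (e : V ⟶ Y) : Prop where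
  memW : W ∈ P
  wp : IsWeakProduct P p q
  det : DeterminedByProjections P p q e
  comm₁ : p ≫ w = e ≫ f
  comm₂ : q = e ≫ g

/-- A weak simple product: a weakly terminal candidate diagram. -/
structure IsWeakSimpleProduct (P : Set E) {J Y X : E} (f : Y ⟶ J) (g : Y ⟶ X)
    (W V : E) (w : W ⟶ J) (p : V ⟶ W) (q : V ⟶ X) (e : V ⟶ Y) : Prop where
  cone : WSPCone P f g W V w p q e
  lift : ∀ ⦃W' V' : E⦄ (w' : W' ⟶ J) (p' : V' ⟶ W') (q' : V' ⟶ X) (e' : V' ⟶ Y),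
    WSPCone P f g W' V' w' p' q' e' →
    ∃ (α : W' ⟶ W) (β : V' ⟶ V),
      α ≫ w = w' ∧ β ≫ p = p' ≫ α ∧ β ≫ q = q' ∧ β ≫ e = e'

/-- `P` has weak simple products. -/
def HasWeakSimpleProducts (P : Set E) : Prop :=
  ∀ ⦃J Y X : E⦄, J ∈ P → Y ∈ P → X ∈ P → ∀ (f : Y ⟶ J) (g : Y ⟶ X),
    ∃ (W V : E) (w : W ⟶ J) (p : V ⟶ W) (q : V ⟶ X) (e : V ⟶ Y),
      IsWeakSimpleProduct P f g W V w p q e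

/-! ## Pseudo simple products -/

/-- A candidate diagram for a pseudo simple product (no determinacy requirement). -/
structure PSPCone (P : Set E) {J Y X : E} (f : Y ⟶ J) (g : Y ⟶ X)
    (W V : E) (w : W ⟶ J) (p : V ⟶ W) (q : V ⟶ X) (e : V ⟶ Y) : Prop where
  memW : W ∈ P
  wp : IsWeakProduct P p q
  comm₁ : p ≫ w = e ≫ f
  comm₂ : q = e ≫ g

/-- A pseudo simple product: a weakly terminal candidate diagram. -/
structure IsPseudoSimpleProduct (P : Set E) {J Y X : E} (f : Y ⟶ J) (g : Y ⟶ X)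
    (W V : E) (w : W ⟶ J) (p : V ⟶ W) (q : V ⟶ X) (e : V ⟶ Y) : Prop where
  cone : PSPCone P f g W V w p q e
  lift : ∀ ⦃W' V' : E⦄ (w' : W' ⟶ J) (p' : V' ⟶ W') (q' : V' ⟶ X) (e' : V' ⟶ Y),
    PSPCone P f g W' V' w' p' q' e' →
    ∃ (α : W' ⟶ W) (β : V' ⟶ V),
      α ≫ w = w' ∧ β ≫ p = p' ≫ α ∧ β ≫ q = q' ∧ β ≫ e = e'

/-- `P` has pseudo simple products. -/
def HasPseudoSimpleProducts (P : Set E) : Prop :=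
  ∀ ⦃J Y X : E⦄, J ∈ P → Y ∈ P → X ∈ P → ∀ (f : Y ⟶ J) (g : Y ⟶ X),
    ∃ (W V : E) (w : W ⟶ J) (p : V ⟶ W) (q : V ⟶ X) (e : V ⟶ Y),
      IsPseudoSimpleProduct P f g W V w p q e

/-! ## Weak exponentials -/

/-- A candidate diagram for a weak exponential of `X` and `Y`. -/
structure WExpCone (P : Set E) {X Y : E} (W V : E) (p : V ⟶ W) (q : V ⟶ X)
    (e : V ⟶ Y) : Prop where
  memW : W ∈ P
  wp : IsWeakProduct P p q
  det : DeterminedByProjections P p q e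

/-- A weak exponential of `X` and `Y` in `P`. -/
structure IsWeakExponential (P : Set E) {X Y : E} (W V : E) (p : V ⟶ W) (q : V ⟶ X)
    (e : V ⟶ Y) : Prop where
  cone : WExpCone P W V p q e
  lift : ∀ ⦃W' V' : E⦄ (p' : V' ⟶ W') (q' : V' ⟶ X) (e' : V' ⟶ Y),
    WExpCone P W' V' p' q' e' →
    ∃ (α : W' ⟶ W) (β : V' ⟶ V), β ≫ p = p' ≫ α ∧ β ≫ q = q' ∧ β ≫ e = e'

/-- `P` has weak exponentials. -/
def HasWeakExponentials (P : Set E) : Prop :=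
  ∀ ⦃X Y : E⦄, X ∈ P → Y ∈ P →
    ∃ (W V : E) (p : V ⟶ W) (q : V ⟶ X) (e : V ⟶ Y), IsWeakExponential P W V p q e

/-- A quasi exponential of `X` and `B`: the weak universal property of an exponential
restricted to projective sources. -/
def IsQuasiExponential [HasFiniteLimits E] (P : Set E) (X : E) {B : E} (W : E)
    (e : W ⨯ X ⟶ B) : Prop :=
  ∀ ⦃Z : E⦄, Z ∈ P → ∀ f : Z ⨯ X ⟶ B, ∃ g : Z ⟶ W, prod.map g (𝟙 X) ≫ e = f

section FinLim2
variable [HasFiniteLimits E]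

/-! ## Pseudo equivalence relations, equalities and generalised weak (simple) products -/

/-- A pseudo equivalence relation: a pair of parallel arrows whose image in `E` is an
equivalence relation. -/
def IsPseudoEquivRel {Y1 Y0 : E} (y₁ y₂ : Y1 ⟶ Y0) : Prop :=
  ∃ (R : E) (e : Y1 ⟶ R) (m : R ⟶ Y0 ⨯ Y0), RegEpi e ∧ Mono m ∧
    e ≫ m = prod.lift y₁ y₂ ∧ IsEquivRelPair (m ≫ prod.fst) (m ≫ prod.snd)

/-- An equality for a weak limit, relative to the comparison arrow `c : V0 ⟶ L` into
the actual limit: a pseudo equivalence relation `v₁, v₂ : V1 ⇉ V0` in `P` such that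
`c` is a coequaliser of `v₁, v₂` and `V1` regularly covers the kernel pair of `c`. -/
structure IsEqualityFor (P : Set E) {V1 V0 L : E} (c : V0 ⟶ L) (v₁ v₂ : V1 ⟶ V0) :
    Prop where
  mem : V1 ∈ P
  per : IsPseudoEquivRel v₁ v₂
  w : v₁ ≫ c = v₂ ≫ c
  coeq : Nonempty (IsColimit (Cofork.ofπ c w))
  cover : RegEpi (pullback.lift v₁ v₂ w)

/-- An arrow `e : V ⟶ Z0` out of a weak product with projections `p, q` preserves
projections with respect to a pseudo equivalence relation `z₁, z₂ : Z1 ⇉ Z0` if for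
any equality `v₁, v₂ : V1 ⇉ V` for the weak product there is `t : V1 ⟶ Z1` with
`t ≫ zᵢ = vᵢ ≫ e`. -/
def PreservesProjWP (P : Set E) {V X Y Z1 Z0 : E} (p : V ⟶ X) (q : V ⟶ Y)
    (z₁ z₂ : Z1 ⟶ Z0) (e : V ⟶ Z0) : Prop :=
  ∀ ⦃V1 : E⦄ (v₁ v₂ : V1 ⟶ V), IsEqualityFor P (prod.lift p q) v₁ v₂ →
    ∃ t : V1 ⟶ Z1, t ≫ z₁ = v₁ ≫ e ∧ t ≫ z₂ = v₂ ≫ e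

/-- A candidate diagram for a generalised weak simple product of `f` and `g` with
respect to the pseudo equivalence relation `y₁, y₂`. -/
structure GWSPCone (P : Set E) {Y1 Y0 J X : E} (y₁ y₂ : Y1 ⟶ Y0) (f : Y0 ⟶ J)
    (g : Y0 ⟶ X) (W V : E) (w : W ⟶ J) (p : V ⟶ W) (q : V ⟶ X) (e : V ⟶ Y0) :
    Prop where
  memW : W ∈ P
  wp : IsWeakProduct P p q
  pres : PreservesProjWP P p q y₁ y₂ e
  comm₁ : p ≫ w = e ≫ f
  comm₂ : q = e ≫ g

/-- A generalised weak simple product: a weakly terminal candidate diagram. -/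
structure IsGWSP (P : Set E) {Y1 Y0 J X : E} (y₁ y₂ : Y1 ⟶ Y0) (f : Y0 ⟶ J)
    (g : Y0 ⟶ X) (W V : E) (w : W ⟶ J) (p : V ⟶ W) (q : V ⟶ X) (e : V ⟶ Y0) :
    Prop where
  cone : GWSPCone P y₁ y₂ f g W V w p q e
  lift : ∀ ⦃W' V' : E⦄ (w' : W' ⟶ J) (p' : V' ⟶ W') (q' : V' ⟶ X) (e' : V' ⟶ Y0),
    GWSPCone P y₁ y₂ f g W' V' w' p' q' e' →
    ∃ (α : W' ⟶ W) (β : V' ⟶ V),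
      α ≫ w = w' ∧ β ≫ p = p' ≫ α ∧ β ≫ q = q' ∧ β ≫ e = e'

/-- `P` has generalised weak simple products. -/
def HasGWSP (P : Set E) : Prop :=
  ∀ ⦃Y1 Y0 J X : E⦄, Y1 ∈ P → Y0 ∈ P → J ∈ P → X ∈ P →
    ∀ (y₁ y₂ : Y1 ⟶ Y0), IsPseudoEquivRel y₁ y₂ →
    ∀ (f : Y0 ⟶ J) (g : Y0 ⟶ X), y₁ ≫ f = y₂ ≫ f → y₁ ≫ g = y₂ ≫ g →
    ∃ (W V : E) (w : W ⟶ J) (p : V ⟶ W) (q : V ⟶ X) (e : V ⟶ Y0),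
      IsGWSP P y₁ y₂ f g W V w p q e

/-- A candidate diagram for a generalised weak exponential of `X` and `y₁, y₂`. -/
structure GWExpCone (P : Set E) {X Y1 Y0 : E} (y₁ y₂ : Y1 ⟶ Y0)
    (W V : E) (p : V ⟶ W) (q : V ⟶ X) (e : V ⟶ Y0) : Prop where
  memW : W ∈ P
  wp : IsWeakProduct P p q
  pres : PreservesProjWP P p q y₁ y₂ e

/-- A generalised weak exponential of `X` and a pseudo equivalence relation. -/
structure IsGWExp (P : Set E) {X Y1 Y0 : E} (y₁ y₂ : Y1 ⟶ Y0)
    (W V : E) (p : V ⟶ W) (q : V ⟶ X) (e : V ⟶ Y0) : Prop where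
  cone : GWExpCone P y₁ y₂ W V p q e
  lift : ∀ ⦃W' V' : E⦄ (p' : V' ⟶ W') (q' : V' ⟶ X) (e' : V' ⟶ Y0),
    GWExpCone P y₁ y₂ W' V' p' q' e' →
    ∃ (α : W' ⟶ W) (β : V' ⟶ V), β ≫ p = p' ≫ α ∧ β ≫ q = q' ∧ β ≫ e = e'

/-! ## Weak pullbacks and generalised weak dependent products -/

/-- A weak pullback in `P` of the cospan `X →f J ←w W`. -/
structure IsWeakPullback (P : Set E) {X J W V : E} (f : X ⟶ J) (w : W ⟶ J)
    (a : V ⟶ X) (b : V ⟶ W) : Prop where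
  mem : V ∈ P
  comm : a ≫ f = b ≫ w
  lift : ∀ ⦃V' : E⦄, V' ∈ P → ∀ (a' : V' ⟶ X) (b' : V' ⟶ W), a' ≫ f = b' ≫ w →
    ∃ h : V' ⟶ V, h ≫ a = a' ∧ h ≫ b = b'

/-- Preservation of projections for an arrow out of a weak pullback. -/
def PreservesProjWPB (P : Set E) {V X J W Z1 Z0 : E} (f : X ⟶ J) (w : W ⟶ J)
    (a : V ⟶ X) (b : V ⟶ W) (h : a ≫ f = b ≫ w) (z₁ z₂ : Z1 ⟶ Z0) (e : V ⟶ Z0) :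
    Prop :=
  ∀ ⦃V1 : E⦄ (v₁ v₂ : V1 ⟶ V), IsEqualityFor P (pullback.lift a b h) v₁ v₂ →
    ∃ t : V1 ⟶ Z1, t ≫ z₁ = v₁ ≫ e ∧ t ≫ z₂ = v₂ ≫ e

/-- A candidate diagram for a generalised weak dependent product of `g : Y0 ⟶ X`
along `f : X ⟶ J` with respect to `y₁, y₂`. -/
structure GWDPCone (P : Set E) {Y1 Y0 X J : E} (y₁ y₂ : Y1 ⟶ Y0) (g : Y0 ⟶ X)
    (f : X ⟶ J) (W V : E) (w : W ⟶ J) (a : V ⟶ X) (b : V ⟶ W) (e : V ⟶ Y0) :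
    Prop where
  memW : W ∈ P
  comm : a ≫ f = b ≫ w
  wpb : IsWeakPullback P f w a b
  overX : e ≫ g = a
  pres : PreservesProjWPB P f w a b comm y₁ y₂ e

/-- A generalised weak dependent product: a weakly terminal candidate diagram. -/
structure IsGWDP (P : Set E) {Y1 Y0 X J : E} (y₁ y₂ : Y1 ⟶ Y0) (g : Y0 ⟶ X)
    (f : X ⟶ J) (W V : E) (w : W ⟶ J) (a : V ⟶ X) (b : V ⟶ W) (e : V ⟶ Y0) :
    Prop where
  cone : GWDPCone P y₁ y₂ g f W V w a b e
  lift : ∀ ⦃W' V' : E⦄ (w' : W' ⟶ J) (a' : V' ⟶ X) (b' : V' ⟶ W') (e' : V' ⟶ Y0),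
    GWDPCone P y₁ y₂ g f W' V' w' a' b' e' →
    ∃ (α : W' ⟶ W) (β : V' ⟶ V),
      α ≫ w = w' ∧ β ≫ a = a' ∧ β ≫ b = b' ≫ α ∧ β ≫ e = e'

/-- `P` has generalised weak dependent products (i.e. `P` is weakly locally cartesian
closed). -/
def HasGWDP (P : Set E) : Prop :=
  ∀ ⦃Y1 Y0 X J : E⦄, Y1 ∈ P → Y0 ∈ P → X ∈ P → J ∈ P →
    ∀ (y₁ y₂ : Y1 ⟶ Y0), IsPseudoEquivRel y₁ y₂ →
    ∀ (g : Y0 ⟶ X) (f : X ⟶ J), y₁ ≫ g = y₂ ≫ g →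
    ∃ (W V : E) (w : W ⟶ J) (a : V ⟶ X) (b : V ⟶ W) (e : V ⟶ Y0),
      IsGWDP P y₁ y₂ g f W V w a b e

/-! ## The functor `w_X` on subobjects induced by weak simple products -/

/-- The adjunction property of the weak-simple-product operation `w_X` on subobjects:
for every subobject `a : A ↪ J ⨯ X`, every `P`-cover `Y ↠ A`, every weak simple
product `W → J` of the induced span and every image factorisation `W ↠ I ↪ J` of it,
the subobject `I ↪ J` is a value at `a` of a right adjoint to
`(−) ⨯ X : Sub(J) → Sub(J ⨯ X)`. -/
def WAdj (P : Set E) (J X : E) : Prop :=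
  ∀ ⦃A : E⦄ (a : A ⟶ J ⨯ X), Mono a →
  ∀ ⦃Y : E⦄, Y ∈ P → ∀ (c : Y ⟶ A), RegEpi c →
  ∀ ⦃W V : E⦄ (w : W ⟶ J) (p : V ⟶ W) (q : V ⟶ X) (e : V ⟶ Y),
    IsWeakSimpleProduct P (c ≫ a ≫ prod.fst) (c ≫ a ≫ prod.snd) W V w p q e →
  ∀ ⦃I : E⦄ (ew : W ⟶ I) (m : I ⟶ J), RegEpi ew → Mono m → ew ≫ m = w →
  ∀ ⦃B : E⦄ (b : B ⟶ J), Mono b →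
    ((∃ t : B ⨯ X ⟶ A, t ≫ a = prod.map b (𝟙 X)) ↔ ∃ s : B ⟶ I, s ≫ m = b)

/-! ## Weak dependent products (à la Carboni–Rosolini) -/

/-- `P` has weak dependent products: for `f : X ⟶ J` and `g : Y ⟶ X` in `P` there are
`w : W ⟶ J` in `P` and a surjection `Hom_{P/J}(h, w) → Hom_{P/X}(f*(h), g)` natural
in `h ∈ P/J`. -/
def HasWeakDependentProducts (P : Set E) : Prop :=
  ∀ ⦃X J Y : E⦄, X ∈ P → J ∈ P → Y ∈ P → ∀ (f : X ⟶ J) (g : Y ⟶ X),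
    ∃ (W : E) (_ : W ∈ P) (w : W ⟶ J)
      (ε : ∀ ⦃T : E⦄, T ∈ P → ∀ (h : T ⟶ J) (k : T ⟶ W), k ≫ w = h →
        (pullback h f ⟶ Y)),
      (∀ ⦃T : E⦄ (hT : T ∈ P) (h : T ⟶ J) (k : T ⟶ W) (hk : k ≫ w = h),
         ε hT h k hk ≫ g = pullback.snd h f) ∧
      (∀ ⦃T : E⦄ (hT : T ∈ P) (h : T ⟶ J) (d : pullback h f ⟶ Y),
         d ≫ g = pullback.snd h f → ∃ (k : T ⟶ W) (hk : k ≫ w = h), ε hT h k hk = d) ∧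
      (∀ ⦃T' T : E⦄ (hT' : T' ∈ P) (hT : T ∈ P) (u : T' ⟶ T) (h : T ⟶ J) (k : T ⟶ W)
         (hk : k ≫ w = h),
         ε hT' (u ≫ h) (u ≫ k) (by rw [Category.assoc, hk]) =
           pullback.map (u ≫ h) f h f u (𝟙 X) (𝟙 J) (by simp) (by simp) ≫ ε hT h k hk)

end FinLim2

/-! ## Auxiliary lemmas -/

section Aux

theorem epi_of_regEpi {A B : E} {f : A ⟶ B} (h : RegEpi f) : Epi f := by
  obtain ⟨h⟩ := h
  haveI := h
  exact RegularEpi.epi f h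

theorem regEpi_comp_iso {A B C : E} {f : A ⟶ B} {g : B ⟶ C} (hf : RegEpi f) (hg : IsIso g) :
    RegEpi (f ≫ g) := by
  obtain ⟨hf⟩ := hf
  haveI := RegularEpi.epi f hf
  have w' : hf.left ≫ f ≫ g = hf.right ≫ f ≫ g := by
    rw [← Category.assoc, ← Category.assoc, hf.w]
  refine ⟨{ W := hf.W, left := hf.left, right := hf.right, w := w', isColimit := ?_ }⟩
  refine Cofork.IsColimit.mk _
    (fun s => inv g ≫ Cofork.IsColimit.desc hf.isColimit s.π s.condition) (fun s => ?_)
    (fun s μ hμ => ?_)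
  · have := Cofork.IsColimit.π_desc' hf.isColimit s.π s.condition
    simp only [Cofork.π_ofπ] at this ⊢
    rw [Category.assoc, IsIso.hom_inv_id_assoc, this]
  · have h1 := Cofork.IsColimit.π_desc' hf.isColimit s.π s.condition
    simp only [Cofork.π_ofπ] at h1 hμ
    have : g ≫ μ = Cofork.IsColimit.desc hf.isColimit s.π s.condition := by
      rw [← cancel_epi f, ← Category.assoc, h1, ← hμ, Category.assoc]
    show μ = inv g ≫ Cofork.IsColimit.desc hf.isColimit s.π s.condition
    rw [← this, IsIso.inv_hom_id_assoc]

variable [HasFiniteLimits E]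

theorem regEpi_of_factor (hE : IsExact E) {Z C D : E} (l : Z ⟶ C) {h : C ⟶ D}
    (hr : RegEpi (l ≫ h)) : RegEpi h := by
  obtain ⟨I, e₁, m₁, he₁, hm₁, hem⟩ := hE.factor h
  obtain ⟨R⟩ := hr
  haveI := RegularEpi.epi _ R
  haveI := hm₁
  have key : R.left ≫ l ≫ e₁ = R.right ≫ l ≫ e₁ := by
    rw [← cancel_mono m₁]
    have := R.w
    simp only [Category.assoc, hem]
    simpa only [Category.assoc] using this
  set d := Cofork.IsColimit.desc R.isColimit (l ≫ e₁) (by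
    simpa only [Category.assoc] using key) with hd
  have hfac : (l ≫ h) ≫ d = l ≫ e₁ := by
    have := Cofork.IsColimit.π_desc' R.isColimit (l ≫ e₁) (by
      simpa only [Category.assoc] using key)
    simpa only [Cofork.π_ofπ] using this
  have hdm : d ≫ m₁ = 𝟙 D := by
    rw [← cancel_epi (l ≫ h), ← Category.assoc, hfac, Category.assoc, hem, Category.comp_id]
  have hmd : m₁ ≫ d = 𝟙 I := by
    rw [← cancel_mono m₁, Category.assoc, hdm, Category.comp_id, Category.id_comp]
  have : IsIso m₁ := ⟨d, hmd, hdm⟩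
  rw [← hem]
  exact regEpi_comp_iso ⟨he₁.some⟩ this

theorem regEpi_comp (hE : IsExact E) {P : Set E} (hP : IsProjectiveCover P)
    {A B C : E} {f : A ⟶ B} {g : B ⟶ C} (hf : RegEpi f) (hg : RegEpi g) :
    RegEpi (f ≫ g) := by
  obtain ⟨Z, hZ, z, hz⟩ := hP.2 C
  obtain ⟨l₁, hl₁⟩ := hP.1 Z hZ g hg z
  obtain ⟨l₂, hl₂⟩ := hP.1 Z hZ f hf l₁
  refine regEpi_of_factor hE l₂ ?_
  have : l₂ ≫ f ≫ g = z := by rw [← Category.assoc, hl₂, hl₁]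
  rwa [this]

theorem regEpi_prod_map (hE : IsExact E) {P : Set E} (hP : IsProjectiveCover P)
    {U T : E} (X : E) {u : U ⟶ T} (hu : RegEpi u) : RegEpi (prod.map u (𝟙 X)) := by
  obtain ⟨Z, hZ, z, hz⟩ := hP.2 (T ⨯ X)
  obtain ⟨k, hk⟩ := hP.1 Z hZ u hu (z ≫ prod.fst)
  refine regEpi_of_factor hE (prod.lift k (z ≫ prod.snd)) ?_
  have : prod.lift k (z ≫ prod.snd) ≫ prod.map u (𝟙 X) = z := by
    apply Limits.prod.hom_ext <;> simp [hk]
    · exact prod.lift_fst _ _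
    · exact prod.lift_snd _ _
  rwa [this]

theorem factor_mono_of_cover {C D I J' : E} {r : C ⟶ D} (hr : RegEpi r) {m : I ⟶ J'}
    (hm : Mono m) (ψ : D ⟶ J') (l : C ⟶ I) (hl : l ≫ m = r ≫ ψ) :
    ∃ s : D ⟶ I, s ≫ m = ψ := by
  obtain ⟨R⟩ := hr
  haveI := RegularEpi.epi _ R
  haveI := hm
  have hx : R.left ≫ l = R.right ≫ l := by
    rw [← cancel_mono m]
    simp only [Category.assoc, hl]
    rw [← Category.assoc, ← Category.assoc, R.w]
  refine ⟨Cofork.IsColimit.desc R.isColimit l hx, ?_⟩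
  have hfac : r ≫ Cofork.IsColimit.desc R.isColimit l hx = l := by
    simpa only [Cofork.π_ofπ] using Cofork.IsColimit.π_desc' R.isColimit l hx
  rw [← cancel_epi r, ← Category.assoc, hfac, hl]

theorem desc_of_kernelPair {C D Z : E} {r : C ⟶ D} (hr : RegEpi r) (g₀ : C ⟶ Z)
    (hg : pullback.fst r r ≫ g₀ = pullback.snd r r ≫ g₀) : ∃ g : D ⟶ Z, r ≫ g = g₀ := by
  obtain ⟨R⟩ := hr
  have hx : R.left ≫ g₀ = R.right ≫ g₀ := by
    have h1 : pullback.lift R.left R.right R.w ≫ pullback.fst r r = R.left :=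
      pullback.lift_fst _ _ _
    have h2 : pullback.lift R.left R.right R.w ≫ pullback.snd r r = R.right :=
      pullback.lift_snd _ _ _
    conv_lhs => rw [← h1]
    conv_rhs => rw [← h2]
    rw [Category.assoc, Category.assoc, hg]
  refine ⟨Cofork.IsColimit.desc R.isColimit g₀ hx, ?_⟩
  simpa only [Cofork.π_ofπ] using Cofork.IsColimit.π_desc' R.isColimit g₀ hx

theorem weakProduct_of_cover {P : Set E} (hP : IsProjectiveCover P)
    {Z X V' : E} (hV' : V' ∈ P) {cv : V' ⟶ Z ⨯ X} (hcv : RegEpi cv) :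
    IsWeakProduct P (cv ≫ prod.fst) (cv ≫ prod.snd) := by
  refine ⟨hV', fun V'' hV'' p'' q'' => ?_⟩
  obtain ⟨h, hh⟩ := hP.1 V'' hV'' cv hcv (prod.lift p'' q'')
  exact ⟨h, by rw [← Category.assoc, hh]; exact prod.lift_fst _ _, by rw [← Category.assoc, hh]; exact prod.lift_snd _ _⟩

theorem det_of_factor (P : Set E) {V' Z X R : E} (cv : V' ⟶ Z ⨯ X) (ρ : Z ⨯ X ⟶ R) :
    DeterminedByProjections P (cv ≫ prod.fst) (cv ≫ prod.snd) (cv ≫ ρ) := by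
  intro V'' _ h k h1 h2
  have : h ≫ cv = k ≫ cv :=
    prod.hom_ext (by simpa using h1) (by simpa using h2)
  rw [← Category.assoc, ← Category.assoc, this]

/-- Internal projectivity implies the adjunction property of `w_X`. -/
theorem wadj_of_ip (hE : IsExact E) {P : Set E} (hP : IsProjectiveCover P)
    {X : E} (hXip : InternallyProjective X) (J : E) : WAdj P J X := by
  intro A a ha Y hY c hc W V w p q e hwsp I ew m hew hm hewm B b hb
  haveI := ha
  haveI := hm
  constructor
  · -- `b ⨯ X ≤ a` implies `b ≤ w_X a` : uses internal projectivity
    rintro ⟨t, ht⟩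
    obtain ⟨U, u, g, hu, hg⟩ := hXip c hc t
    obtain ⟨U', hU', d, hd⟩ := hP.2 U
    obtain ⟨V', hV', cv, hcv⟩ := hP.2 (U' ⨯ X)
    have cone : WSPCone P (c ≫ a ≫ prod.fst) (c ≫ a ≫ prod.snd) U' V' (d ≫ u ≫ b)
        (cv ≫ prod.fst) (cv ≫ prod.snd) (cv ≫ prod.map d (𝟙 X) ≫ g) := by
      refine ⟨hU', weakProduct_of_cover hP hV' hcv, det_of_factor P cv _, ?_, ?_⟩
      · simp only [Category.assoc, reassoc_of% hg, reassoc_of% ht,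
          prod.map_fst_assoc, prod.map_fst, Category.comp_id]
      · simp only [Category.assoc, reassoc_of% hg, reassoc_of% ht,
          prod.map_snd_assoc, prod.map_snd, Category.comp_id]
    obtain ⟨α, β, hα, -, -, -⟩ := hwsp.lift _ _ _ _ cone
    refine factor_mono_of_cover (regEpi_comp hE hP hd hu) hm b (α ≫ ew) ?_
    rw [Category.assoc, hewm, hα, Category.assoc]
  · -- `b ≤ w_X a` implies `b ⨯ X ≤ a` : always true
    rintro ⟨s, hs⟩
    have hr₀ : RegEpi (pullback.snd ew s) := hE.stable ew s hew
    have hkb : pullback.fst ew s ≫ w = pullback.snd ew s ≫ b := by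
      rw [← hewm, ← hs, ← Category.assoc, pullback.condition, Category.assoc]
    obtain ⟨Z, hZ, cz, hcz⟩ := hP.2 (pullback ew s ⨯ X)
    obtain ⟨h, hp, hq⟩ := hwsp.cone.wp.lift hZ (cz ≫ prod.fst ≫ pullback.fst ew s)
      (cz ≫ prod.snd)
    have hreg : RegEpi (cz ≫ prod.map (pullback.snd ew s) (𝟙 X)) :=
      regEpi_comp hE hP hcz (regEpi_prod_map hE hP X hr₀)
    refine factor_mono_of_cover hreg ha (prod.map b (𝟙 X)) (h ≫ e ≫ c) ?_
    apply Limits.prod.hom_ext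
    · have h1 : h ≫ e ≫ c ≫ a ≫ prod.fst = h ≫ p ≫ w := by
        rw [hwsp.cone.comm₁]
      simp only [Category.assoc] at h1 ⊢
      rw [h1, reassoc_of% hp]
      simp only [Category.assoc, prod.map_fst, prod.map_fst_assoc, Category.comp_id, hkb]
    · have h2 : h ≫ e ≫ c ≫ a ≫ prod.snd = h ≫ q := by
        rw [hwsp.cone.comm₂]
      simp only [Category.assoc] at h2 ⊢
      rw [h2, hq]
      simp only [Category.assoc, prod.map_snd, prod.map_snd_assoc, Category.comp_id]

/-- The adjunction property of `w_X` (for all `J ∈ P`) implies internal projectivity. -/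
theorem ip_of_wadj (hE : IsExact E) {P : Set E} (hP : IsProjectiveCover P)
    (hwsp : HasWeakSimpleProducts P) {X : E} (hX : X ∈ P)
    (hw : ∀ J ∈ P, WAdj P J X) : InternallyProjective X := by
  intro T A B e he f
  obtain ⟨J, hJ, j, hj⟩ := hP.2 T
  set f' : J ⨯ X ⟶ B := prod.map j (𝟙 X) ≫ f with hf'
  have hπ : RegEpi (pullback.snd e f') := hE.stable e f' he
  obtain ⟨Y, hY, cq, hcq⟩ := hP.2 (pullback e f')
  set c : Y ⟶ J ⨯ X := cq ≫ pullback.snd e f' with hcdef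
  have hc : RegEpi c := regEpi_comp hE hP hcq hπ
  obtain ⟨W, V, w, p, q, e', hWSP⟩ :=
    hwsp hJ hY hX (c ≫ 𝟙 (J ⨯ X) ≫ prod.fst) (c ≫ 𝟙 (J ⨯ X) ≫ prod.snd)
  obtain ⟨I, ew, m, hew, hm, hewm⟩ := hE.factor w
  have hiff := hw J hJ (𝟙 (J ⨯ X)) inferInstance hY c hc w p q e' hWSP ew m hew hm hewm
    (𝟙 J) inferInstance
  obtain ⟨s, hs⟩ := hiff.mp ⟨𝟙 _, by simp⟩
  set u := pullback.snd ew s with hudef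
  have hu : RegEpi u := hE.stable ew s hew
  have hkw : pullback.fst ew s ≫ w = u := by
    rw [← hewm, ← Category.assoc, pullback.condition, Category.assoc, hs, Category.comp_id]
  obtain ⟨Z, hZ, cz, hcz⟩ := hP.2 (pullback ew s ⨯ X)
  obtain ⟨h, hp, hq⟩ := hWSP.cone.wp.lift hZ (cz ≫ prod.fst ≫ pullback.fst ew s)
    (cz ≫ prod.snd)
  have hkey : h ≫ e' ≫ c = cz ≫ prod.map u (𝟙 X) := by
    apply Limits.prod.hom_ext
    · have h1 : h ≫ e' ≫ c ≫ prod.fst = h ≫ p ≫ w := by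
        have := hWSP.cone.comm₁
        simp only [Category.id_comp] at this
        rw [this]
      simp only [Category.assoc] at h1 ⊢
      rw [h1, reassoc_of% hp]
      simp only [Category.assoc, prod.map_fst, hkw]
    · have h2 : h ≫ e' ≫ c ≫ prod.snd = h ≫ q := by
        have := hWSP.cone.comm₂
        simp only [Category.id_comp] at this
        rw [this]
      simp only [Category.assoc] at h2 ⊢
      rw [h2, hq]
      simp only [prod.map_snd, Category.comp_id]
  set g₀ : Z ⟶ A := h ≫ e' ≫ cq ≫ pullback.fst e f' with hg₀
  obtain ⟨K', hK', cov, hcov⟩ := hP.2 (pullback cz cz)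
  have hdet : pullback.fst cz cz ≫ h ≫ e' = pullback.snd cz cz ≫ h ≫ e' := by
    haveI := epi_of_regEpi hcov
    rw [← cancel_epi cov]
    have := hWSP.cone.det hK' (cov ≫ pullback.fst cz cz ≫ h) (cov ≫ pullback.snd cz cz ≫ h)
      (by simp only [Category.assoc, hp, pullback.condition_assoc])
      (by simp only [Category.assoc, hq, pullback.condition_assoc])
    simpa only [Category.assoc] using this
  have hker : pullback.fst cz cz ≫ g₀ = pullback.snd cz cz ≫ g₀ := by
    rw [hg₀]
    simp only [reassoc_of% hdet]
  obtain ⟨g, hgz⟩ := desc_of_kernelPair hcz g₀ hker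
  refine ⟨pullback ew s, u ≫ j, g, regEpi_comp hE hP hu hj, ?_⟩
  haveI := epi_of_regEpi hcz
  have hkey' : h ≫ e' ≫ cq ≫ pullback.snd e f' = cz ≫ prod.map u (𝟙 X) := by
    simpa only [hcdef, Category.assoc] using hkey
  have hmap : prod.map (u ≫ j) (𝟙 X) = prod.map u (𝟙 X) ≫ prod.map j (𝟙 X) := by
    rw [prod.map_map, Category.comp_id]
  rw [← cancel_epi cz, reassoc_of% hgz, hg₀, hmap]
  simp only [Category.assoc, pullback.condition]
  rw [reassoc_of% hkey', hf']

end Aux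

/-- For `X ∈ P`, with `P` having weak simple products, the following are
equivalent: (1) `w_X` is a right adjoint to `(−) ⨯ X` on subobjects for every `J ∈ P`;
(2) `(−) ⨯ X` preserves projective objects; (3) `X` is internally projective. -/
theorem stmt4 {E : Type u} [Category.{v} E] [HasFiniteLimits E]
    (hE : IsExact E) (P : Set E) (hP : IsProjectiveCover P)
    (hwsp : HasWeakSimpleProducts P) (X : E) (hX : X ∈ P) :
    ((∀ J ∈ P, WAdj P J X) ↔ InternallyProjective X) ∧
    ((∀ A : E, RegProjective A → RegProjective (A ⨯ X)) ↔ InternallyProjective X) := by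
  constructor
  · exact ⟨fun hw => ip_of_wadj hE hP hwsp hX hw,
      fun hip J _ => wadj_of_ip hE hP hip J⟩
  · constructor
    · -- products preserve projectives → internally projective
      intro hpp T A B e he f
      obtain ⟨U, hU, jcov, hj⟩ := hP.2 T
      obtain ⟨g, hg⟩ := hpp U (hP.1 U hU) e he (prod.map jcov (𝟙 X) ≫ f)
      exact ⟨U, jcov, g, hj, hg⟩
    · -- internally projective → products preserve projectives
      intro hip A hA C D e he f
      obtain ⟨U, u, g, hu, hg⟩ := hip e he f
      obtain ⟨s, hs⟩ := hA u hu (𝟙 A)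
      refine ⟨prod.map s (𝟙 X) ≫ g, ?_⟩
      rw [Category.assoc, hg, ← Category.assoc, prod.map_map, hs, Category.comp_id,
        prod.map_id_id, Category.id_comp]

end ExComp
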